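/- Let G be a finite connected simple graph with at least two vertices and an edge-weight function w : E(G) → ℝ that is injective on the edge set, and let T be the (unique) minimum spanning tree of G. Then T is a minimum bottleneck spanning tree: the maximum edge weight of T is less than or equal to the maximum edge weight of every spanning tree of G. -/

import Mathlib

open SimpleGraph

/-- `T` is a spanning tree of `G`: a spanning subgraph (same vertex set, edges of `G`)
that is a tree (connected and acyclic). -/
def IsSpanningTree {V : Type*} (G T : SimpleGraph V) : Prop :=
  T ≤ G ∧ T.IsTree

/-- Total edge weight of a graph (sum of `w` over its edge set). -/
noncomputable def totalWeight {V : Type*} [Fintype V] (w : Sym2 V → ℝ)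
    (T : SimpleGraph V) : ℝ :=
  ∑ e ∈ T.edgeSet.toFinite.toFinset, w e

/-- Maximum edge weight of a graph (as `WithBot ℝ`, `⊥` if there are no edges). -/
noncomputable def maxWeight {V : Type*} [Fintype V] (w : Sym2 V → ℝ)
    (T : SimpleGraph V) : WithBot ℝ :=
  (T.edgeSet.toFinite.toFinset.image w).max

/-- Removing one edge `s(u,v)` from `T`: a walk from `x` to `z` yields, after the
deletion, either a walk from `x` to `z`, or walks connecting `x, z` to `u, v`. -/
lemma walk_deleteEdges_or {V : Type*} {T : SimpleGraph V} {u v x z : V}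
    (p : T.Walk x z) :
    (T.deleteEdges {s(u, v)}).Reachable x z ∨
      ((T.deleteEdges {s(u, v)}).Reachable x u ∧ (T.deleteEdges {s(u, v)}).Reachable v z) ∨
      ((T.deleteEdges {s(u, v)}).Reachable x v ∧ (T.deleteEdges {s(u, v)}).Reachable u z) := by
  induction p with
  | nil => exact Or.inl (Reachable.refl _)
  | @cons a b c h p ih =>
    by_cases he : s(a, b) = s(u, v)
    · rw [Sym2.eq_iff] at he
      rcases he with ⟨rfl, rfl⟩ | ⟨rfl, rfl⟩
      · rcases ih with h1 | ⟨h1, h2⟩ | ⟨h1, h2⟩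
        · exact Or.inr (Or.inl ⟨Reachable.refl _, h1⟩)
        · exact Or.inr (Or.inl ⟨Reachable.refl _, h2⟩)
        · exact Or.inl h2
      · rcases ih with h1 | ⟨h1, h2⟩ | ⟨h1, h2⟩
        · exact Or.inr (Or.inr ⟨Reachable.refl _, h1⟩)
        · exact Or.inl h2
        · exact Or.inr (Or.inr ⟨Reachable.refl _, h2⟩)
    · have hadj : (T.deleteEdges {s(u, v)}).Adj a b := by
        simp only [deleteEdges_adj, Set.mem_singleton_iff]
        exact ⟨h, he⟩
      rcases ih with h1 | ⟨h1, h2⟩ | ⟨h1, h2⟩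
      · exact Or.inl (hadj.reachable.trans h1)
      · exact Or.inr (Or.inl ⟨hadj.reachable.trans h1, h2⟩)
      · exact Or.inr (Or.inr ⟨hadj.reachable.trans h1, h2⟩)

/-- Consequence: every vertex reaches `u` or `v` after deleting `s(u,v)`. -/
lemma reachable_deleteEdges_or {V : Type*} {T : SimpleGraph V} {u v x : V}
    (p : T.Walk x u) :
    (T.deleteEdges {s(u, v)}).Reachable x u ∨ (T.deleteEdges {s(u, v)}).Reachable x v := by
  rcases walk_deleteEdges_or (u := u) (v := v) p with h1 | ⟨h1, _⟩ | ⟨h1, _⟩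
  · exact Or.inl h1
  · exact Or.inl h1
  · exact Or.inr h1

/-- In a finite connected graph on at least two vertices with distinct edge
weights, the (unique) minimum spanning tree is a minimum bottleneck spanning
tree: its maximum edge weight is at most the maximum edge weight of every
spanning tree. -/
theorem mst_is_minimum_bottleneck {V : Type*} [Fintype V]
    (hcard : 2 ≤ Fintype.card V)
    (G : SimpleGraph V) (hG : G.Connected)
    (w : Sym2 V → ℝ) (hw : Set.InjOn w G.edgeSet)
    (T : SimpleGraph V) (hT : IsSpanningTree G T)
    (hmin : ∀ T', IsSpanningTree G T' → totalWeight w T ≤ totalWeight w T')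
    (T' : SimpleGraph V) (hT' : IsSpanningTree G T') :
    maxWeight w T ≤ maxWeight w T' := by
  classical
  by_contra hcon
  push_neg at hcon
  have hTconn : T.Connected := hT.2.isConnected
  have hT'conn : T'.Connected := hT'.2.isConnected
  -- T has an edge
  obtain ⟨x₀, y₀, hxy₀⟩ := Fintype.exists_pair_of_one_lt_card (by omega : 1 < Fintype.card V)
  obtain ⟨p₀⟩ := hTconn.preconnected x₀ y₀
  have hTedge : T.edgeSet.Nonempty := by
    cases p₀ with
    | nil => exact absurd rfl hxy₀
    | cons h _ => exact ⟨_, (mem_edgeSet _).mpr h⟩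
  have hne : ((T.edgeSet.toFinite.toFinset).image w).Nonempty := by
    refine Finset.Nonempty.image ?_ w
    rwa [Set.Finite.toFinset_nonempty]
  -- the heaviest edge of T
  obtain ⟨e, heT, hwe⟩ := Finset.mem_image.mp (Finset.max'_mem _ hne)
  have hmaxT : maxWeight w T = ((w e : ℝ) : WithBot ℝ) := by
    rw [maxWeight, ← Finset.coe_max' hne, hwe]
  induction e using Sym2.ind with
  | _ u v =>
  have heT' : s(u, v) ∈ T.edgeSet := (Set.Finite.mem_toFinset _).mp heT
  have heuv : T.Adj u v := (mem_edgeSet _).mp heT'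
  -- e is a bridge of T
  have hbridge : ¬(T.deleteEdges {s(u, v)}).Reachable u v :=
    ((isAcyclic_iff_forall_adj_isBridge.mp hT.2.IsAcyclic) heuv)
  set A : Set V := {x | (T.deleteEdges {s(u, v)}).Reachable u x} with hA
  have huA : u ∈ A := Reachable.refl _
  have hvA : v ∉ A := fun h => hbridge h
  -- boundary dart of a walk in T'
  obtain ⟨p⟩ := hT'conn.preconnected u v
  obtain ⟨d, _, haA, hbA⟩ := p.exists_boundary_dart A huA hvA
  have hab : T'.Adj d.fst d.snd := d.adj
  have habne : d.fst ≠ d.snd := hab.ne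
  have hfT' : s(d.fst, d.snd) ∈ T'.edgeSet := (mem_edgeSet _).mpr hab
  -- w f < w e
  have hwf_le : ((w s(d.fst, d.snd) : ℝ) : WithBot ℝ) ≤ maxWeight w T' :=
    Finset.le_max (Finset.mem_image_of_mem w ((Set.Finite.mem_toFinset _).mpr hfT'))
  have hwflt : w s(d.fst, d.snd) < w s(u, v) := by
    have h2 : ((w s(d.fst, d.snd) : ℝ) : WithBot ℝ) < ((w s(u, v) : ℝ) : WithBot ℝ) :=
      lt_of_le_of_lt hwf_le (hmaxT ▸ hcon)
    exact_mod_cast h2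
  have hfne : s(d.fst, d.snd) ≠ s(u, v) := fun h => by
    rw [h] at hwflt; exact lt_irrefl _ hwflt
  -- f is not an edge of T
  have hfT : s(d.fst, d.snd) ∉ T.edgeSet := by
    intro hf
    have hadj : (T.deleteEdges {s(u, v)}).Adj d.fst d.snd := by
      simp only [deleteEdges_adj, Set.mem_singleton_iff]
      exact ⟨(mem_edgeSet _).mp hf, hfne⟩
    exact hbA (haA.trans hadj.reachable)
  -- the exchanged graph
  set T'' : SimpleGraph V := T.deleteEdges {s(u, v)} ⊔ fromEdgeSet {s(d.fst, d.snd)} with hT''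
  have hT''le : T'' ≤ G := by
    refine sup_le ((deleteEdges_le _).trans hT.1) ?_
    intro x y hxy
    rw [fromEdgeSet_adj] at hxy
    obtain ⟨h1, _⟩ := hxy
    rw [Set.mem_singleton_iff] at h1
    have hmem : s(x, y) ∈ G.edgeSet := h1 ▸ (edgeSet_mono hT'.1 hfT')
    exact (mem_edgeSet _).mp hmem
  have hmono : T.deleteEdges {s(u, v)} ≤ T'' := le_sup_left
  have hT''ab : T''.Adj d.fst d.snd := by
    rw [hT'', sup_adj, fromEdgeSet_adj]
    exact Or.inr ⟨rfl, habne⟩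
  -- not reachable a→b after deleting e
  have hnab : ¬(T.deleteEdges {s(u, v)}).Reachable d.fst d.snd := fun h =>
    hbA (haA.trans h)
  have hbv : (T.deleteEdges {s(u, v)}).Reachable d.snd v := by
    obtain ⟨q⟩ := hTconn.preconnected d.snd u
    rcases reachable_deleteEdges_or (v := v) q with h | h
    · exact absurd h.symm (fun hh => hbA hh)
    · exact h
  -- connectivity of T''
  have huv'' : T''.Reachable u v :=
    ((haA.mono hmono).trans (hT''ab.reachable)).trans (hbv.mono hmono)
  have hconn'' : T''.Connected := by
    rw [connected_iff_exists_forall_reachable]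
    refine ⟨u, fun z => ?_⟩
    obtain ⟨q⟩ := hTconn.preconnected z u
    rcases reachable_deleteEdges_or (v := v) q with h | h
    · exact (h.mono hmono).symm
    · exact huv''.trans (h.mono hmono).symm
  -- acyclicity of T''
  have hT''f_le : T''.deleteEdges {s(d.fst, d.snd)} ≤ T.deleteEdges {s(u, v)} := by
    intro x y hxy
    rw [deleteEdges_adj, Set.mem_singleton_iff] at hxy
    obtain ⟨h1, h2⟩ := hxy
    rw [hT'', sup_adj, fromEdgeSet_adj] at h1
    rcases h1 with h1 | ⟨h1, _⟩
    · exact h1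
    · exact absurd (Set.mem_singleton_iff.mp h1) h2
  have hbridge'' : T''.IsBridge s(d.fst, d.snd) := by
    rw [isBridge_iff]
    exact fun h => hnab (Reachable.mono hT''f_le h)
  have hacyc'' : T''.IsAcyclic := by
    intro z c hc
    by_cases hf : s(d.fst, d.snd) ∈ c.edges
    · exact (isBridge_iff_adj_and_forall_cycle_notMem hT''ab).mp hbridge'' c hc hf
    · have hsub : ∀ e' ∈ c.edges, e' ∈ T.edgeSet := by
        intro e' he'
        have hmem : e' ∈ T''.edgeSet := c.edges_subset_edgeSet he'
        rw [hT'', edgeSet_sup, edgeSet_deleteEdges, edgeSet_fromEdgeSet] at hmem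
        rcases hmem with ⟨h1, _⟩ | ⟨h1, _⟩
        · exact h1
        · exact absurd (Set.mem_singleton_iff.mp h1 ▸ he') hf
      exact hT.2.IsAcyclic (c.transfer T hsub) (hc.transfer hsub)
  have hST'' : IsSpanningTree G T'' := ⟨hT''le, ⟨hconn'', hacyc''⟩⟩
  -- weight computation
  have hedge'' : T''.edgeSet = (T.edgeSet \ {s(u, v)}) ∪ {s(d.fst, d.snd)} := by
    rw [hT'', edgeSet_sup, edgeSet_deleteEdges, edgeSet_fromEdgeSet]
    congr 1
    ext e'
    simp only [Set.mem_diff, Set.mem_singleton_iff, Set.mem_setOf_eq, and_iff_left_iff_imp]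
    rintro rfl
    exact fun hd => habne (Sym2.mk_isDiag_iff.mp hd)
  have hfin'' : T''.edgeSet.toFinite.toFinset =
      insert s(d.fst, d.snd) ((T.edgeSet.toFinite.toFinset).erase s(u, v)) := by
    ext e'
    simp only [Set.Finite.mem_toFinset, hedge'', Set.mem_union, Set.mem_diff,
      Set.mem_singleton_iff, Finset.mem_insert, Finset.mem_erase]
    tauto
  have htot'' : totalWeight w T'' = w s(d.fst, d.snd) + (totalWeight w T - w s(u, v)) := by
    rw [totalWeight, hfin'', Finset.sum_insert (by
      simp only [Finset.mem_erase, Set.Finite.mem_toFinset]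
      exact fun h => hfT h.2)]
    congr 1
    rw [Finset.sum_erase_eq_sub heT]
    rfl
  have hle := hmin T'' hST''
  rw [htot''] at hle
  linarith
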